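/- arXiv:1708.00547 — 2 statements merged into one kernel-verified Lean document; each statement's English description precedes it below -/
import Mathlib

section
/- For 0 < T < 1/3, there exists k > 0 such that c(k) = c(2k), i.e., the second-harmonic resonance condition i₃(k) = 0 has a solution, where c(k) = sqrt((1 + T k²)·tanh(k)/k). -/
noncomputable def cT (T k : ℝ) : ℝ := Real.sqrt ((1 + T * k ^ 2) * Real.tanh k / k)

lemma aux_B {x : ℝ} (hx : 0 ≤ x) : Real.sinh x ≤ x * Real.cosh x := by
  have key : ∀ y : ℝ, HasDerivAt (fun t => t * Real.cosh t - Real.sinh t)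
      (y * Real.sinh y) y := by
    intro y
    have h1 := (hasDerivAt_id y).mul (Real.hasDerivAt_cosh y)
    have h2 := Real.hasDerivAt_sinh y
    have := h1.sub h2
    refine this.congr_deriv ?_
    simp [id]
  have mono : MonotoneOn (fun t => t * Real.cosh t - Real.sinh t) (Set.Ici 0) := by
    apply monotoneOn_of_hasDerivWithinAt_nonneg (convex_Ici 0)
      (fun y _ => ((key y).continuousAt).continuousWithinAt)
      (fun y _ => (key y).hasDerivWithinAt)
    intro y hy
    rw [interior_Ici] at hy
    exact mul_nonneg (le_of_lt hy) (Real.sinh_nonneg_iff.2 (le_of_lt hy))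
  have := mono (Set.self_mem_Ici) (Set.mem_Ici.2 hx) hx
  simpa using this

lemma aux_A {x : ℝ} (hx : 0 ≤ x) : (x - x ^ 3 / 3) * Real.cosh x ≤ Real.sinh x := by
  have key : ∀ y : ℝ, HasDerivAt (fun t => Real.sinh t - (t - t ^ 3 / 3) * Real.cosh t)
      (y ^ 2 * Real.cosh y - (y - y ^ 3 / 3) * Real.sinh y) y := by
    intro y
    have hp : HasDerivAt (fun t : ℝ => t - t ^ 3 / 3) (1 - y ^ 2) y := by
      have := ((hasDerivAt_pow 3 y).div_const 3)
      have := (hasDerivAt_id y).sub this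
      refine this.congr_deriv ?_
      ring
    have h1 := hp.mul (Real.hasDerivAt_cosh y)
    have h2 := Real.hasDerivAt_sinh y
    have := h2.sub h1
    refine this.congr_deriv ?_
    ring
  have mono : MonotoneOn (fun t => Real.sinh t - (t - t ^ 3 / 3) * Real.cosh t) (Set.Ici 0) := by
    apply monotoneOn_of_hasDerivWithinAt_nonneg (convex_Ici 0)
      (fun y _ => ((key y).continuousAt).continuousWithinAt)
      (fun y _ => (key y).hasDerivWithinAt)
    intro y hy
    rw [interior_Ici] at hy
    have hy0 : 0 ≤ y := hy.le
    have hB := aux_B hy0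
    have hs : 0 ≤ Real.sinh y := Real.sinh_nonneg_iff.2 hy0
    have hc : 0 < Real.cosh y := Real.cosh_pos y
    nlinarith [mul_nonneg hy0 (sub_nonneg.2 hB), mul_nonneg (mul_nonneg (mul_nonneg hy0 hy0) hy0) hs]
  have := mono (Set.self_mem_Ici) (Set.mem_Ici.2 hx) hx
  simp only [Real.sinh_zero, Real.cosh_zero] at this
  nlinarith [this]

lemma aux_C {x : ℝ} (hx : 0 ≤ x) (hx1 : x ≤ 1) :
    Real.sinh x ≤ (x - x ^ 3 / 3 + 2 * x ^ 5 / 15) * Real.cosh x := by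
  have key : ∀ y : ℝ, HasDerivAt
      (fun t => (t - t ^ 3 / 3 + 2 * t ^ 5 / 15) * Real.cosh t - Real.sinh t)
      ((-(y ^ 2) + 2 * y ^ 4 / 3) * Real.cosh y
        + (y - y ^ 3 / 3 + 2 * y ^ 5 / 15) * Real.sinh y) y := by
    intro y
    have hp : HasDerivAt (fun t : ℝ => t - t ^ 3 / 3 + 2 * t ^ 5 / 15)
        (1 - y ^ 2 + 2 * y ^ 4 / 3) y := by
      have h3 := (hasDerivAt_pow 3 y).div_const 3
      have h5 := ((hasDerivAt_pow 5 y).const_mul 2).div_const 15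
      have := ((hasDerivAt_id y).sub h3).add h5
      refine this.congr_deriv ?_
      ring
    have h1 := hp.mul (Real.hasDerivAt_cosh y)
    have := h1.sub (Real.hasDerivAt_sinh y)
    refine this.congr_deriv ?_
    ring
  have mono : MonotoneOn
      (fun t => (t - t ^ 3 / 3 + 2 * t ^ 5 / 15) * Real.cosh t - Real.sinh t)
      (Set.Icc 0 1) := by
    apply monotoneOn_of_hasDerivWithinAt_nonneg (convex_Icc 0 1)
      (fun y _ => ((key y).continuousAt).continuousWithinAt)
      (fun y _ => (key y).hasDerivWithinAt)
    intro y hy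
    rw [interior_Icc] at hy
    obtain ⟨hy0, hy1⟩ := hy
    have hy0 := hy0.le
    have hy1 := hy1.le
    have hA := aux_A hy0
    have hs : 0 ≤ Real.sinh y := Real.sinh_nonneg_iff.2 hy0
    have hc : 0 < Real.cosh y := Real.cosh_pos y
    have hy3 : y ^ 3 ≤ y := by
      nlinarith [mul_nonneg (mul_nonneg hy0 (sub_nonneg.2 hy1)) (by linarith : (0:ℝ) ≤ 1 + y)]
    have hy5 : (0:ℝ) ≤ y ^ 5 := pow_nonneg hy0 5
    have hp : 0 ≤ y - y ^ 3 / 3 + 2 * y ^ 5 / 15 := by linarith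
    have hysq : y ^ 2 ≤ 1 := by nlinarith
    have hpoly : 0 ≤ 11 * y ^ 6 / 45 - 2 * y ^ 8 / 45 := by
      nlinarith [mul_nonneg (pow_nonneg hy0 6) (sub_nonneg.2 hysq)]
    nlinarith [mul_nonneg hp (sub_nonneg.2 hA), mul_nonneg hpoly hc.le]
  have := mono (Set.mem_Icc.2 ⟨le_refl 0, zero_le_one⟩) (Set.mem_Icc.2 ⟨hx, hx1⟩) hx
  simp only [Real.sinh_zero, Real.cosh_zero] at this
  nlinarith [this]

lemma tanh_ge {x : ℝ} (hx : 0 ≤ x) : x - x ^ 3 / 3 ≤ Real.tanh x := by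
  rw [Real.tanh_eq_sinh_div_cosh, le_div_iff₀ (Real.cosh_pos x)]
  exact aux_A hx

lemma tanh_le' {x : ℝ} (hx : 0 ≤ x) (hx1 : x ≤ 1) :
    Real.tanh x ≤ x - x ^ 3 / 3 + 2 * x ^ 5 / 15 := by
  rw [Real.tanh_eq_sinh_div_cosh, div_le_iff₀ (Real.cosh_pos x)]
  exact aux_C hx hx1

lemma tanh_mono {x y : ℝ} (hxy : x ≤ y) : Real.tanh x ≤ Real.tanh y := by
  rw [Real.tanh_eq_sinh_div_cosh, Real.tanh_eq_sinh_div_cosh,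
    div_le_div_iff₀ (Real.cosh_pos x) (Real.cosh_pos y)]
  have := Real.sinh_nonneg_iff.2 (sub_nonneg.2 hxy)
  rw [Real.sinh_sub] at this
  linarith

lemma tanh_pos {x : ℝ} (hx : 0 < x) : 0 < Real.tanh x := by
  rw [Real.tanh_eq_sinh_div_cosh]
  exact div_pos (Real.sinh_pos_iff.2 hx) (Real.cosh_pos x)

set_option maxHeartbeats 1000000 in
theorem second_harmonic_resonance_exists : ∀ T : ℝ, 0 < T → T < 1 / 3 →
    ∃ k : ℝ, 0 < k ∧ cT T k = cT T (2 * k) := by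
  intro T hT hT3
  have hs : 0 < 1 - 3 * T := by linarith
  set a : ℝ := min (1 / 2) (Real.sqrt (1 - 3 * T) / 2) with ha_def
  set b : ℝ := 1 + 1 / Real.sqrt T with hb_def
  have hsqT : 0 < Real.sqrt T := Real.sqrt_pos.2 hT
  have ha : 0 < a := lt_min (by norm_num) (by positivity)
  have ha2 : a ≤ 1 / 2 := min_le_left _ _
  have hasq : a ^ 2 ≤ (1 - 3 * T) / 4 := by
    have h1 : a ≤ Real.sqrt (1 - 3 * T) / 2 := min_le_right _ _
    have := Real.sq_sqrt hs.le
    nlinarith [Real.sqrt_nonneg (1 - 3 * T)]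
  have hb1 : (1 : ℝ) ≤ b := by
    rw [hb_def]
    have : 0 < 1 / Real.sqrt T := by positivity
    linarith
  have hab : a ≤ b := by linarith
  have hTb : 1 < T * b ^ 2 := by
    have h1 : 1 / Real.sqrt T < b := by
      rw [hb_def]; linarith
    have h2 : (1 / Real.sqrt T) ^ 2 < b ^ 2 := by
      apply pow_lt_pow_left₀ h1 (by positivity)
      norm_num
    have h3 : (1 / Real.sqrt T) ^ 2 = 1 / T := by
      rw [div_pow, one_pow, Real.sq_sqrt hT.le]
    rw [h3, div_lt_iff₀ hT] at h2
    nlinarith [h2]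
  set h : ℝ → ℝ := fun k => (1 + T * (2 * k) ^ 2) * Real.tanh (2 * k) / (2 * k)
    - (1 + T * k ^ 2) * Real.tanh k / k with hh_def
  have htc : Continuous Real.tanh := by
    have he : Real.tanh = fun x => Real.sinh x / Real.cosh x :=
      funext fun x => Real.tanh_eq_sinh_div_cosh x
    rw [he]
    exact Real.continuous_sinh.div Real.continuous_cosh fun x => (Real.cosh_pos x).ne'
  have hcont : ContinuousOn h (Set.Icc a b) := by
    apply ContinuousOn.sub
    · apply ContinuousOn.div
      · exact ((continuous_const.add (continuous_const.mul ((continuous_const.mul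
          continuous_id).pow 2))).mul (htc.comp (continuous_const.mul
          continuous_id))).continuousOn
      · exact (continuous_const.mul continuous_id).continuousOn
      · intro k hk
        have : a ≤ k := hk.1
        have : 0 < 2 * k := by linarith
        exact this.ne'
    · apply ContinuousOn.div
      · exact ((continuous_const.add (continuous_const.mul (continuous_pow 2))).mul
          htc).continuousOn
      · exact continuous_id.continuousOn
      · intro k hk
        have : a ≤ k := hk.1
        have : 0 < k := by linarith
        exact this.ne'
  have hha : h a < 0 := by
    have h2a : 2 * a ≤ 1 := by linarith
    have htu : Real.tanh (2 * a) ≤ (2 * a) - (2 * a) ^ 3 / 3 + 2 * (2 * a) ^ 5 / 15 :=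
      tanh_le' (by linarith) h2a
    have htl : a - a ^ 3 / 3 ≤ Real.tanh a := tanh_ge ha.le
    rw [hh_def]
    simp only [sub_neg]
    rw [div_lt_div_iff₀ (by linarith) ha]
    have e1 : (1 + T * (2 * a) ^ 2) * Real.tanh (2 * a)
        ≤ (1 + T * (2 * a) ^ 2) * ((2 * a) - (2 * a) ^ 3 / 3 + 2 * (2 * a) ^ 5 / 15) := by
      apply mul_le_mul_of_nonneg_left htu
      positivity
    have e2 : (1 + T * a ^ 2) * (a - a ^ 3 / 3) ≤ (1 + T * a ^ 2) * Real.tanh a := by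
      apply mul_le_mul_of_nonneg_left htl
      positivity
    have key : (1 + T * (2 * a) ^ 2) * ((2 * a) - (2 * a) ^ 3 / 3 + 2 * (2 * a) ^ 5 / 15) * a
        < (1 + T * a ^ 2) * (a - a ^ 3 / 3) * (2 * a) := by
      have ha4 : a ^ 2 ≤ 1 / 4 := by nlinarith
      have h1 : a ^ 2 * a ^ 2 ≤ a ^ 2 / 4 := by
        nlinarith [mul_nonneg (sq_nonneg a) (sub_nonneg.2 ha4)]
      have h2 : T * (a ^ 2 * a ^ 2) ≤ a ^ 2 / 12 := by
        nlinarith [mul_nonneg (by linarith : (0:ℝ) ≤ 1 / 3 - T)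
          (mul_nonneg (sq_nonneg a) (sq_nonneg a))]
      have h3 : 0 ≤ T * a ^ 2 := mul_nonneg hT.le (sq_nonneg a)
      have hB : 0 < (1 - 3 * T) + (5 * T - 32 / 15) * a ^ 2
          - 128 * T / 15 * (a ^ 2 * a ^ 2) := by
        have h4 : 5 * T * a ^ 2 = 5 * (T * a ^ 2) := by ring
        linarith [hasq]
      have hexp : (1 + T * a ^ 2) * (a - a ^ 3 / 3) * (2 * a)
          - (1 + T * (2 * a) ^ 2) * ((2 * a) - (2 * a) ^ 3 / 3 + 2 * (2 * a) ^ 5 / 15) * a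
          = 2 * (a ^ 2 * a ^ 2) * ((1 - 3 * T) + (5 * T - 32 / 15) * a ^ 2
            - 128 * T / 15 * (a ^ 2 * a ^ 2)) := by ring
      have hpos : 0 < 2 * (a ^ 2 * a ^ 2) := by positivity
      nlinarith [mul_pos hpos hB]
    calc (1 + T * (2 * a) ^ 2) * Real.tanh (2 * a) * a
        ≤ (1 + T * (2 * a) ^ 2) * ((2 * a) - (2 * a) ^ 3 / 3 + 2 * (2 * a) ^ 5 / 15) * a := by
          apply mul_le_mul_of_nonneg_right e1 ha.le
      _ < (1 + T * a ^ 2) * (a - a ^ 3 / 3) * (2 * a) := key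
      _ ≤ (1 + T * a ^ 2) * Real.tanh a * (2 * a) := by
          apply mul_le_mul_of_nonneg_right e2 (by linarith)
  have hhb : 0 < h b := by
    have hb0 : 0 < b := by linarith
    have htm : Real.tanh b ≤ Real.tanh (2 * b) := tanh_mono (by linarith)
    have htp : 0 < Real.tanh b := tanh_pos hb0
    rw [hh_def]
    simp only [sub_pos]
    rw [div_lt_div_iff₀ hb0 (by linarith)]
    have key : (1 + T * b ^ 2) * Real.tanh b * 2 < (1 + T * (2 * b) ^ 2) * Real.tanh b := by
      nlinarith
    calc (1 + T * b ^ 2) * Real.tanh b * (2 * b)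
        = ((1 + T * b ^ 2) * Real.tanh b * 2) * b := by ring
      _ < ((1 + T * (2 * b) ^ 2) * Real.tanh b) * b := by
          apply mul_lt_mul_of_pos_right key hb0
      _ ≤ (1 + T * (2 * b) ^ 2) * Real.tanh (2 * b) * b := by
          apply mul_le_mul_of_nonneg_right _ hb0.le
          apply mul_le_mul_of_nonneg_left htm
          positivity
  have hmem : (0 : ℝ) ∈ Set.Icc (h a) (h b) := Set.mem_Icc.2 ⟨hha.le, hhb.le⟩
  obtain ⟨k, hk, hk0⟩ := intermediate_value_Icc hab hcont hmem
  refine ⟨k, lt_of_lt_of_le ha hk.1, ?_⟩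
  unfold cT
  congr 1
  simp only [hh_def] at hk0
  linarith
end

section
/- There exists k_c in the interval (1, 1.1) such that the factor i₄(k) = 9 c(k)²·(((k c(k))')² − 1) + (c(k)² − c(2k)²)·(3 + 15 c(k)² + 6 k c(k) c'(k) − k² c'(k)²), with c(k) = sqrt(tanh(k)/k), vanishes: i₄(k_c) = 0. -/
noncomputable def cww (k : ℝ) : ℝ := Real.sqrt (Real.tanh k / k)

noncomputable def i4 (k : ℝ) : ℝ :=
  9 * cww k ^ 2 * ((deriv (fun k => k * cww k) k) ^ 2 - 1) +
    (cww k ^ 2 - cww (2 * k) ^ 2) *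
      (3 + 15 * cww k ^ 2 + 6 * k * cww k * deriv cww k - k ^ 2 * (deriv cww k) ^ 2)

set_option maxHeartbeats 1600000

/-! ### Auxiliary lemmas -/

lemma my_hasDerivAt_tanh (x : ℝ) : HasDerivAt Real.tanh (1 - Real.tanh x ^ 2) x := by
  have hfun : Real.tanh = fun y => Real.sinh y / Real.cosh y :=
    funext fun y => Real.tanh_eq_sinh_div_cosh y
  have h : HasDerivAt (fun y => Real.sinh y / Real.cosh y) _ x := (Real.hasDerivAt_sinh x).div (Real.hasDerivAt_cosh x) (Real.cosh_pos x).ne'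
  rw [hfun]
  convert h using 1
  have hc := (Real.cosh_pos x).ne'
  have hsq : Real.cosh x ^ 2 - Real.sinh x ^ 2 = 1 := Real.cosh_sq_sub_sinh_sq x
  show 1 - (Real.sinh x / Real.cosh x) ^ 2 = _
  rw [div_pow, one_sub_div (pow_ne_zero 2 hc)]
  ring

lemma my_continuous_tanh : Continuous Real.tanh := by
  have : Differentiable ℝ Real.tanh := fun x => (my_hasDerivAt_tanh x).differentiableAt
  exact this.continuous

lemma tanh_formula (x : ℝ) :
    Real.tanh x = (Real.exp x ^ 2 - 1) / (Real.exp x ^ 2 + 1) := by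
  have h1 : (0:ℝ) < Real.exp x := Real.exp_pos x
  rw [Real.tanh_eq_sinh_div_cosh, Real.sinh_eq, Real.cosh_eq, Real.exp_neg]
  rw [div_eq_div_iff (by positivity) (by positivity)]
  field_simp

lemma lt_tanh_of {x a : ℝ} (ha : 0 < a) (h : a < Real.exp x) :
    (a ^ 2 - 1) / (a ^ 2 + 1) < Real.tanh x := by
  rw [tanh_formula]
  rw [div_lt_div_iff₀ (by positivity) (by positivity)]
  nlinarith

lemma tanh_lt_of {x a : ℝ} (ha : 0 < Real.exp x) (h : Real.exp x < a) :
    Real.tanh x < (a ^ 2 - 1) / (a ^ 2 + 1) := by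
  rw [tanh_formula]
  rw [div_lt_div_iff₀ (by positivity) (by positivity)]
  nlinarith

open Finset in
lemma exp_pt1_bounds : (1.1051614 : ℝ) < Real.exp 0.1 ∧ Real.exp 0.1 < 1.1051719 := by
  have h := Real.exp_bound (x := 0.1) (by rw [abs_of_nonneg] <;> norm_num) (n := 4) (by norm_num)
  have hs : ∑ m ∈ range 4, (0.1:ℝ) ^ m / m.factorial = 1 + 0.1 + 0.005 + 1/6000 := by
    simp [Finset.sum_range_succ, Nat.factorial]
    norm_num
  rw [hs, abs_le] at h
  norm_num [Nat.factorial, abs_of_nonneg] at h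
  constructor <;> [linarith [h.1]; linarith [h.2]]

lemma tanh_num_bounds :
    ((0.7615941:ℝ) < Real.tanh 1 ∧ Real.tanh 1 < 0.7615942) ∧
    ((0.9640275:ℝ) < Real.tanh 2 ∧ Real.tanh 2 < 0.9640276) ∧
    ((0.8004958:ℝ) < Real.tanh 1.1 ∧ Real.tanh 1.1 < 0.8005005) ∧
    ((0.9757422:ℝ) < Real.tanh 2.2 ∧ Real.tanh 2.2 < 0.9757436) := by
  have e1l : (2.7182818283:ℝ) < Real.exp 1 := Real.exp_one_gt_d9
  have e1u : Real.exp 1 < 2.7182818286 := Real.exp_one_lt_d9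
  have he2 : Real.exp 2 = Real.exp 1 * Real.exp 1 := by rw [← Real.exp_add]; norm_num
  have he11 : Real.exp 1.1 = Real.exp 1 * Real.exp 0.1 := by rw [← Real.exp_add]; norm_num
  have he22 : Real.exp 2.2 = Real.exp 1.1 * Real.exp 1.1 := by rw [← Real.exp_add]; norm_num
  have h01 := exp_pt1_bounds
  have e2l : (7.389056098:ℝ) < Real.exp 2 := by
    rw [he2]; calc (7.389056098:ℝ) < 2.7182818283 * 2.7182818283 := by norm_num
      _ < _ := mul_lt_mul'' e1l e1l (by norm_num) (by norm_num)
  have e2u : Real.exp 2 < 7.389056101 := by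
    rw [he2]; calc Real.exp 1 * Real.exp 1 < 2.7182818286 * 2.7182818286 :=
        mul_lt_mul'' e1u e1u (Real.exp_pos 1).le (Real.exp_pos 1).le
      _ < 7.389056101 := by norm_num
  have e11l : (3.0041401:ℝ) < Real.exp 1.1 := by
    rw [he11]; calc (3.0041401:ℝ) < 2.7182818283 * 1.1051614 := by norm_num
      _ < _ := mul_lt_mul'' e1l h01.1 (by norm_num) (by norm_num)
  have e11u : Real.exp 1.1 < 3.0041782 := by
    rw [he11]; calc Real.exp 1 * Real.exp 0.1 < 2.7182818286 * 1.1051719 :=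
        mul_lt_mul'' e1u h01.2 (Real.exp_pos 1).le (Real.exp_pos 0.1).le
      _ < 3.0041782 := by norm_num
  have e22l : (9.024857:ℝ) < Real.exp 2.2 := by
    rw [he22]; calc (9.024857:ℝ) < 3.0041401 * 3.0041401 := by norm_num
      _ < _ := mul_lt_mul'' e11l e11l (by norm_num) (by norm_num)
  have e22u : Real.exp 2.2 < 9.025087 := by
    rw [he22]; calc Real.exp 1.1 * Real.exp 1.1 < 3.0041782 * 3.0041782 :=
        mul_lt_mul'' e11u e11u (Real.exp_pos 1.1).le (Real.exp_pos 1.1).le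
      _ < 9.025087 := by norm_num
  refine ⟨⟨?_, ?_⟩, ⟨?_, ?_⟩, ⟨?_, ?_⟩, ⟨?_, ?_⟩⟩
  · calc (0.7615941:ℝ) ≤ ((2.7182818283:ℝ)^2 - 1)/((2.7182818283:ℝ)^2 + 1) := by norm_num
      _ < _ := lt_tanh_of (by norm_num) e1l
  · calc Real.tanh 1 < ((2.7182818286:ℝ)^2 - 1)/((2.7182818286:ℝ)^2 + 1) :=
        tanh_lt_of (Real.exp_pos 1) e1u
      _ ≤ 0.7615942 := by norm_num
  · calc (0.9640275:ℝ) ≤ ((7.389056098:ℝ)^2 - 1)/((7.389056098:ℝ)^2 + 1) := by norm_num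
      _ < _ := lt_tanh_of (by norm_num) e2l
  · calc Real.tanh 2 < ((7.389056101:ℝ)^2 - 1)/((7.389056101:ℝ)^2 + 1) :=
        tanh_lt_of (Real.exp_pos 2) e2u
      _ ≤ 0.9640276 := by norm_num
  · calc (0.8004958:ℝ) ≤ ((3.0041401:ℝ)^2 - 1)/((3.0041401:ℝ)^2 + 1) := by norm_num
      _ < _ := lt_tanh_of (by norm_num) e11l
  · calc Real.tanh 1.1 < ((3.0041782:ℝ)^2 - 1)/((3.0041782:ℝ)^2 + 1) :=
        tanh_lt_of (Real.exp_pos 1.1) e11u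
      _ ≤ 0.8005005 := by norm_num
  · calc (0.9757422:ℝ) ≤ ((9.024857:ℝ)^2 - 1)/((9.024857:ℝ)^2 + 1) := by norm_num
      _ < _ := lt_tanh_of (by norm_num) e22l
  · calc Real.tanh 2.2 < ((9.025087:ℝ)^2 - 1)/((9.025087:ℝ)^2 + 1) :=
        tanh_lt_of (Real.exp_pos 2.2) e22u
      _ ≤ 0.9757436 := by norm_num

lemma tanh_pos_of_pos {k : ℝ} (hk : 0 < k) : 0 < Real.tanh k := by
  rw [Real.tanh_eq_sinh_div_cosh]
  exact div_pos (Real.sinh_pos_iff.2 hk) (Real.cosh_pos k)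

lemma hasDerivAt_cww {k : ℝ} (hk : 0 < k) :
    HasDerivAt cww
      ((((1 - Real.tanh k ^ 2) * k - Real.tanh k) / k ^ 2) / (2 * cww k)) k := by
  have ht := tanh_pos_of_pos hk
  have hf : HasDerivAt (fun y => Real.tanh y / y)
      (((1 - Real.tanh k ^ 2) * k - Real.tanh k * 1) / k ^ 2) k :=
    (my_hasDerivAt_tanh k).div (hasDerivAt_id k) hk.ne'
  have hne : Real.tanh k / k ≠ 0 := (div_pos ht hk).ne'
  have := hf.sqrt hne
  have e : cww = fun y => Real.sqrt (Real.tanh y / y) := rfl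
  rw [e]
  simpa [mul_one] using this

noncomputable def Pfun (k : ℝ) : ℝ :=
  72 * Real.tanh k ^ 3 + 72 * Real.tanh k ^ 2 * ((1 - Real.tanh k ^ 2) * k - Real.tanh k)
    + 18 * Real.tanh k * ((1 - Real.tanh k ^ 2) * k - Real.tanh k) ^ 2
    - 72 * k * Real.tanh k ^ 2
    + 12 * k * Real.tanh k * (2 * Real.tanh k - Real.tanh (2 * k))
    + 60 * Real.tanh k ^ 2 * (2 * Real.tanh k - Real.tanh (2 * k))
    + 12 * Real.tanh k * ((1 - Real.tanh k ^ 2) * k - Real.tanh k)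
        * (2 * Real.tanh k - Real.tanh (2 * k))
    - (2 * Real.tanh k - Real.tanh (2 * k)) * ((1 - Real.tanh k ^ 2) * k - Real.tanh k) ^ 2

lemma key {k : ℝ} (hk : 0 < k) : 8 * k ^ 2 * Real.tanh k * i4 k = Pfun k := by
  have ht := tanh_pos_of_pos hk
  have hT := tanh_pos_of_pos (by linarith : (0:ℝ) < 2 * k)
  have hfk : (0:ℝ) < Real.tanh k / k := div_pos ht hk
  have hc : 0 < cww k := Real.sqrt_pos.2 hfk
  have hc2 : cww k ^ 2 = Real.tanh k / k := Real.sq_sqrt hfk.le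
  have hc2' : cww (2 * k) ^ 2 = Real.tanh (2 * k) / (2 * k) :=
    Real.sq_sqrt (div_pos hT (by linarith)).le
  set t := Real.tanh k with htdef
  set T := Real.tanh (2 * k) with hTdef
  set F := ((1 - t ^ 2) * k - t) / k ^ 2 with hF
  have hd : deriv cww k = F / (2 * cww k) := (hasDerivAt_cww hk).deriv
  have hd2 : deriv (fun y => y * cww y) k = cww k + k * (F / (2 * cww k)) := by
    have : HasDerivAt (fun y => y * cww y) _ k := (hasDerivAt_id' k).mul (hasDerivAt_cww hk)
    simpa using this.deriv
  rw [i4, hd, hd2, hc2, hc2']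
  have e1 : (cww k + k * (F / (2 * cww k))) ^ 2
      = t / k + k * F + k ^ 2 * F ^ 2 / (4 * (t / k)) := by
    have : (cww k + k * (F / (2 * cww k))) ^ 2
        = cww k ^ 2 + k * F + k ^ 2 * F ^ 2 / (4 * cww k ^ 2) := by
      field_simp
      ring
    rw [this, hc2]
  have e2 : k ^ 2 * (F / (2 * cww k)) ^ 2 = k ^ 2 * F ^ 2 / (4 * (t / k)) := by
    rw [div_pow, mul_pow, hc2]
    ring
  have e3 : 6 * k * cww k * (F / (2 * cww k)) = 3 * k * F := by
    field_simp
    ring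
  rw [e1, e2, e3, Pfun, hF, ← htdef, ← hTdef]
  field_simp
  ring

lemma P1pos (t T : ℝ) (h1 : (0.7615941:ℝ) < t) (h2 : t < 0.7615942)
    (h3 : (0.9640275:ℝ) < T) (h4 : T < 0.9640276) :
    0 < 72 * t ^ 3 + 72 * t ^ 2 * ((1 - t ^ 2) * 1 - t) + 18 * t * ((1 - t ^ 2) * 1 - t) ^ 2 - 72 * 1 * t ^ 2 + 12 * 1 * t * (2 * t - T) + 60 * t ^ 2 * (2 * t - T) + 12 * t * ((1 - t ^ 2) * 1 - t) * (2 * t - T) - (2 * t - T) * ((1 - t ^ 2) * 1 - t) ^ 2 := by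
  have pl2 : (0.5800255:ℝ) < t ^ 2 := by nlinarith [h1, h2]
  have pu2 : t ^ 2 < 0.5800258 := by nlinarith [h1, h2]
  have pl3 : (0.441744:ℝ) < t ^ 3 := by nlinarith [h1, h2, pl2, pu2]
  have pu3 : t ^ 3 < 0.4417443 := by nlinarith [h1, h2, pl2, pu2]
  have pl4 : (0.3364296:ℝ) < t ^ 4 := by nlinarith [h1, h2, pl3, pu3]
  have pu4 : t ^ 4 < 0.3364299 := by nlinarith [h1, h2, pl3, pu3]
  have pl5 : (0.2562228:ℝ) < t ^ 5 := by nlinarith [h1, h2, pl4, pu4]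
  have pu5 : t ^ 5 < 0.2562231 := by nlinarith [h1, h2, pl4, pu4]
  have ql1 : (0.7341976:ℝ) < t * T := by nlinarith [h1, h2, h3, h4]
  have qu1 : t * T < 0.7341979 := by nlinarith [h1, h2, h3, h4]
  have ql2 : (0.5591606:ℝ) < t ^ 2 * T := by nlinarith [pl2, pu2, h3, h4]
  have qu2 : t ^ 2 * T < 0.5591609 := by nlinarith [pl2, pu2, h3, h4]
  have ql3 : (0.4258534:ℝ) < t ^ 3 * T := by nlinarith [pl3, pu3, h3, h4]
  have qu3 : t ^ 3 * T < 0.4258537 := by nlinarith [pl3, pu3, h3, h4]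
  have ql4 : (0.3243274:ℝ) < t ^ 4 * T := by nlinarith [pl4, pu4, h3, h4]
  have qu4 : t ^ 4 * T < 0.3243277 := by nlinarith [pl4, pu4, h3, h4]
  nlinarith [pl2, pu2, pl3, pu3, pl4, pu4, pl5, pu5, ql1, qu1, ql2, qu2, ql3, qu3, ql4, qu4]

lemma P11neg (t T : ℝ) (h1 : (0.8004958:ℝ) < t) (h2 : t < 0.8005005)
    (h3 : (0.9757422:ℝ) < T) (h4 : T < 0.9757436) :
    72 * t ^ 3 + 72 * t ^ 2 * ((1 - t ^ 2) * 1.1 - t) + 18 * t * ((1 - t ^ 2) * 1.1 - t) ^ 2 - 72 * 1.1 * t ^ 2 + 12 * 1.1 * t * (2 * t - T) + 60 * t ^ 2 * (2 * t - T) + 12 * t * ((1 - t ^ 2) * 1.1 - t) * (2 * t - T) - (2 * t - T) * ((1 - t ^ 2) * 1.1 - t) ^ 2 < 0 := by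
  have pl2 : (0.6407935:ℝ) < t ^ 2 := by nlinarith [h1, h2]
  have pu2 : t ^ 2 < 0.6408011 := by nlinarith [h1, h2]
  have pl3 : (0.5129525:ℝ) < t ^ 3 := by nlinarith [h1, h2, pl2, pu2]
  have pu3 : t ^ 3 < 0.5129616 := by nlinarith [h1, h2, pl2, pu2]
  have pl4 : (0.4106163:ℝ) < t ^ 4 := by nlinarith [h1, h2, pl3, pu3]
  have pu4 : t ^ 4 < 0.410626 := by nlinarith [h1, h2, pl3, pu3]
  have pl5 : (0.3286966:ℝ) < t ^ 5 := by nlinarith [h1, h2, pl4, pu4]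
  have pu5 : t ^ 5 < 0.3287064 := by nlinarith [h1, h2, pl4, pu4]
  have ql1 : (0.7810775:ℝ) < t * T := by nlinarith [h1, h2, h3, h4]
  have qu1 : t * T < 0.7810833 := by nlinarith [h1, h2, h3, h4]
  have ql2 : (0.6252492:ℝ) < t ^ 2 * T := by nlinarith [pl2, pu2, h3, h4]
  have qu2 : t ^ 2 * T < 0.6252576 := by nlinarith [pl2, pu2, h3, h4]
  have ql3 : (0.5005094:ℝ) < t ^ 3 * T := by nlinarith [pl3, pu3, h3, h4]
  have qu3 : t ^ 3 * T < 0.500519 := by nlinarith [pl3, pu3, h3, h4]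
  have ql4 : (0.4006556:ℝ) < t ^ 4 * T := by nlinarith [pl4, pu4, h3, h4]
  have qu4 : t ^ 4 * T < 0.4006657 := by nlinarith [pl4, pu4, h3, h4]
  nlinarith [pl2, pu2, pl3, pu3, pl4, pu4, pl5, pu5, ql1, qu1, ql2, qu2, ql3, qu3, ql4, qu4]

lemma Pfun_continuous : Continuous Pfun := by
  unfold Pfun
  have h := my_continuous_tanh
  fun_prop

theorem i4_has_root : ∃ kc : ℝ, 1 < kc ∧ kc < 1.1 ∧ i4 kc = 0 := by
  obtain ⟨⟨t1l, t1u⟩, ⟨t2l, t2u⟩, ⟨t11l, t11u⟩, ⟨t22l, t22u⟩⟩ := tanh_num_bounds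
  have h21 : (2:ℝ) * 1 = 2 := by norm_num
  have h211 : (2:ℝ) * 1.1 = 2.2 := by norm_num
  have hP1 : 0 < Pfun 1 := by
    rw [Pfun, h21]
    exact P1pos _ _ t1l t1u t2l t2u
  have hP11 : Pfun 1.1 < 0 := by
    rw [Pfun, h211]
    exact P11neg _ _ t11l t11u t22l t22u
  have hsub := intermediate_value_Ioo' (by norm_num : (1:ℝ) ≤ 1.1)
    (Pfun_continuous.continuousOn (s := Set.Icc 1 1.1))
  have h0 : (0:ℝ) ∈ Set.Ioo (Pfun 1.1) (Pfun 1) := ⟨hP11, hP1⟩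
  obtain ⟨kc, hkc, hPkc⟩ := hsub h0
  refine ⟨kc, hkc.1, hkc.2, ?_⟩
  have hkpos : 0 < kc := by linarith [hkc.1]
  have hkey := key hkpos
  rw [hPkc] at hkey
  have htp := tanh_pos_of_pos hkpos
  have hfac : (8 * kc ^ 2 * Real.tanh kc) ≠ 0 := by positivity
  exact (mul_eq_zero.1 hkey).resolve_left hfac
end
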